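/- For all real t with 0 < t ≤ 1, (1/t³ + 1/(π - t)³)·(-2·ln(cos t))²·cot(t) ≥ 1. -/

import Mathlib

open Real

lemma aux_exp (w : ℝ) (hw : |w| ≤ 1) :
    1 - w + w^2/2 - w^3/6 + w^4/24 - w^5/120 - 7*w^6/4320 ≤ Real.exp (-w) := by
  have hb := Real.exp_bound (x := -w) (by rwa [abs_neg]) (n := 6) (by norm_num)
  rw [show |(-w)| ^ 6 = w ^ 6 from by rw [abs_neg, ← abs_pow, abs_of_nonneg (by positivity)]] at hb
  rw [abs_le] at hb
  have hb1 := hb.1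
  simp only [Finset.sum_range_succ, Finset.sum_range_zero, Nat.factorial] at hb1
  norm_num at hb1
  linarith [hb1]

set_option maxHeartbeats 2000000 in
lemma aux_log (v : ℝ) (h0 : 0 ≤ v) (h2 : v ≤ 1/2) :
    Real.log (1 - v) ≤ -(v + v^2/2 + v^3/3 + v^4/4) := by
  have hv1 : (0:ℝ) < 1 - v := by linarith
  have hh : (0:ℝ) ≤ 1/2 - v := by linarith
  have hw0 : 0 ≤ v + v^2/2 + v^3/3 + v^4/4 := by positivity
  have p2 : v^2 ≤ (1/2)^2 := pow_le_pow_left₀ h0 h2 2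
  have p3 : v^3 ≤ (1/2)^3 := pow_le_pow_left₀ h0 h2 3
  have p4 : v^4 ≤ (1/2)^4 := pow_le_pow_left₀ h0 h2 4
  norm_num at p2 p3 p4
  have habs : |v + v^2/2 + v^3/3 + v^4/4| ≤ 1 := by
    rw [abs_of_nonneg hw0]; linarith
  have hexp := aux_exp (v + v^2/2 + v^3/3 + v^4/4) habs
  have hcert : 0 ≤ (1/5)*v^5 + (-157/4320)*v^6 + (-47/1440)*v^7 + (-149/4320)*v^8 + (-2051/51840)*v^9 + (-1583/69120)*v^10 + (-6103/207360)*v^11 + (-222749/7464960)*v^12 + (-10597/414720)*v^13 + (-145457/7464960)*v^14 + (-22789/1866240)*v^15 + (-606149/89579520)*v^16 + (-9341/2799360)*v^17 + (-1165897/806215680)*v^18 + (-50801/89579520)*v^19 + (-23687/119439360)*v^20 + (-3577/59719680)*v^21 + (-203/13271040)*v^22 + (-7/2211840)*v^23 + (-7/17694720)*v^24 := by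
    have e : (1/5)*v^5 + (-157/4320)*v^6 + (-47/1440)*v^7 + (-149/4320)*v^8 + (-2051/51840)*v^9 + (-1583/69120)*v^10 + (-6103/207360)*v^11 + (-222749/7464960)*v^12 + (-10597/414720)*v^13 + (-145457/7464960)*v^14 + (-22789/1866240)*v^15 + (-606149/89579520)*v^16 + (-9341/2799360)*v^17 + (-1165897/806215680)*v^18 + (-50801/89579520)*v^19 + (-23687/119439360)*v^20 + (-3577/59719680)*v^21 + (-203/13271040)*v^22 + (-7/2211840)*v^23 + (-7/17694720)*v^24 = (524288/5) * v^5 * (1/2 - v)^19 + (53534720/27) * v^6 * (1/2 - v)^18 + (798969856/45) * v^7 * (1/2 - v)^17 + (13510043648/135) * v^8 * (1/2 - v)^16 + (161204075776/405) * v^9 * (1/2 - v)^15 + (160235744032/135) * v^10 * (1/2 - v)^14 + (222894175888/81) * v^11 * (1/2 - v)^13 + (18500168114102/3645) * v^12 * (1/2 - v)^12 + (9182259380954/1215) * v^13 * (1/2 - v)^11 + (66805605500971/7290) * v^14 * (1/2 - v)^10 + (11039529727576/1215) * v^15 * (1/2 - v)^9 + (515468887511087/69984) * v^16 * (1/2 -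 v)^8 + (70875694377691/14580) * v^17 * (1/2 - v)^7 + (32612935730917319/12597120) * v^18 * (1/2 - v)^6 + (9206222144968649/8398080) * v^19 * (1/2 - v)^5 + (24225390462238969/67184640) * v^20 * (1/2 - v)^4 + (3580570235599397/40310784) * v^21 * (1/2 - v)^3 + (4143613964444113/268738560) * v^22 * (1/2 - v)^2 + (451955344852873/268738560) * v^23 * (1/2 - v)^1 + (1118077654785041/12899450880) * v^24 * (1/2 - v)^0 := by ring
    rw [e]
    repeat' apply add_nonneg
    all_goals exact mul_nonneg (mul_nonneg (by norm_num) (pow_nonneg h0 _)) (pow_nonneg hh _)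
  have key : 1 - v ≤ Real.exp (-(v + v^2/2 + v^3/3 + v^4/4)) := by linarith [hexp, hcert]
  exact (Real.log_le_iff_le_exp hv1).mpr key

set_option maxHeartbeats 1000000 in
lemma c_s8l' (t : ℝ) (ht0 : 0 ≤ t) (hu : 0 ≤ 1 - t) : 0 ≤ (1/8)*t + (-1/3072)*t^3 + (-5/393216)*t^4 := by
  have e : (1/8)*t + (-1/3072)*t^3 + (-5/393216)*t^4 = (1/8) * t^1 * (1 - t)^3 + (3/8) * t^2 * (1 - t)^2 + (1151/3072) * t^3 * (1 - t)^1 + (49019/393216) * t^4 * (1 - t)^0 := by ring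
  rw [e]
  repeat' apply add_nonneg
  all_goals exact mul_nonneg (mul_nonneg (by norm_num) (pow_nonneg ht0 _)) (pow_nonneg hu _)

set_option maxHeartbeats 1000000 in
lemma c_c8l' (t : ℝ) (ht0 : 0 ≤ t) (hu : 0 ≤ 1 - t) : 0 ≤ (1) + (-1/128)*t^2 + (-5/393216)*t^4 := by
  have e : (1) + (-1/128)*t^2 + (-5/393216)*t^4 = (1) * t^0 * (1 - t)^4 + (4) * t^1 * (1 - t)^3 + (767/128) * t^2 * (1 - t)^2 + (255/64) * t^3 * (1 - t)^1 + (390139/393216) * t^4 * (1 - t)^0 := by ring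
  rw [e]
  repeat' apply add_nonneg
  all_goals exact mul_nonneg (mul_nonneg (by norm_num) (pow_nonneg ht0 _)) (pow_nonneg hu _)

set_option maxHeartbeats 1000000 in
lemma c_s4l' (t : ℝ) (ht0 : 0 ≤ t) (hu : 0 ≤ 1 - t) : 0 ≤ (1/4)*t + (-1/384)*t^3 + (-5/196608)*t^4 + (1/524288)*t^5 + (5/25165824)*t^6 + (5/603979776)*t^7 + (25/77309411328)*t^8 := by
  have e : (1/4)*t + (-1/384)*t^3 + (-5/196608)*t^4 + (1/524288)*t^5 + (5/25165824)*t^6 + (5/603979776)*t^7 + (25/77309411328)*t^8 = (1/4) * t^1 * (1 - t)^7 + (7/4) * t^2 * (1 - t)^6 + (2015/384) * t^3 * (1 - t)^5 + (572585/65536) * t^4 * (1 - t)^4 + (13721443/1572864) * t^5 * (1 - t)^3 + (131461525/25165824) * t^6 * (1 - t)^2 + (1049042549/603979776) * t^7 * (1 - t)^1 + (19124223641/77309411328) * t^8 * (1 - t)^0 := by ring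
  rw [e]
  repeat' apply add_nonneg
  all_goals exact mul_nonneg (mul_nonneg (by norm_num) (pow_nonneg ht0 _)) (pow_nonneg hu _)

set_option maxHeartbeats 1000000 in
lemma c_c4l' (t : ℝ) (ht0 : 0 ≤ t) (hu : 0 ≤ 1 - t) : 0 ≤ (1) + (-1/32)*t^2 + (1/6144)*t^4 + (-5/786432)*t^5 + (-1/4718592)*t^6 + (5/301989888)*t^7 + (-25/77309411328)*t^8 := by
  have e : (1) + (-1/32)*t^2 + (1/6144)*t^4 + (-5/786432)*t^5 + (-1/4718592)*t^6 + (5/301989888)*t^7 + (-25/77309411328)*t^8 = (1) * t^0 * (1 - t)^8 + (8) * t^1 * (1 - t)^7 + (895/32) * t^2 * (1 - t)^6 + (893/16) * t^3 * (1 - t)^5 + (427201/6144) * t^4 * (1 - t)^4 + (14516393/262144) * t^5 * (1 - t)^3 + (129913253/4718592) * t^6 * (1 - t)^2 + (786495575/100663296) * t^7 * (1 - t)^1 + (8322840943/8589934592) * t^8 * (1 - t)^0 := by ring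
  rw [e]
  repeat' apply add_nonneg
  all_goals exact mul_nonneg (mul_nonneg (by norm_num) (pow_nonneg ht0 _)) (pow_nonneg hu _)

set_option maxHeartbeats 1000000 in
lemma c_s2ld' (t : ℝ) (ht0 : 0 ≤ t) (hu : 0 ≤ 1 - t) : 0 ≤ (3913/4096000000)*t^5 + (52947/65536000000)*t^6 + (4452809/4718592000000)*t^7 + (275/12884901888)*t^8 + (7257679187/7247757312000000)*t^9 + (-205/3710851743744)*t^10 + (1/4947802324992)*t^11 + (-35/7599824371187712)*t^12 + (-415/182395784908505088)*t^13 + (25/2918332558536081408)*t^14 + (125/23346660468288651264)*t^15 + (-625/2988372539940947361792)*t^16 := by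
  have e : (3913/4096000000)*t^5 + (52947/65536000000)*t^6 + (4452809/4718592000000)*t^7 + (275/12884901888)*t^8 + (7257679187/7247757312000000)*t^9 + (-205/3710851743744)*t^10 + (1/4947802324992)*t^11 + (-35/7599824371187712)*t^12 + (-415/182395784908505088)*t^13 + (25/2918332558536081408)*t^14 + (125/23346660468288651264)*t^15 + (-625/2988372539940947361792)*t^16 = (3913/4096000000) * t^5 * (1 - t)^11 + (148327/13107200000) * t^6 * (1 - t)^10 + (290502329/4718592000000) * t^7 * (1 - t)^9 + (40768311851/201326592000000) * t^8 * (1 - t)^8 + (3242280959411/7247757312000000) * t^9 * (1 - t)^7 + (13488464004817/19327352832000000) * t^10 * (1 - t)^6 + (6752357912121/8589934592000000) * t^11 * (1 - t)^5 + (76041081823567301/118747255799808000000) * t^12 * (1 - t)^4 + (1054725247192373321/2849934139195392000000) * t^13 * (1 - t)^3 + (6588879061586843281/45598946227126272000000) * t^14 * (1 - t)^2 + (4166001176491670951/121597189939003392000000) * t^15 * (1 - t)^1 + (19349501187677002511/5188146770730811392000000) * t^16 * (1 - t)^0 := by ring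
  rw [e]
  repeat' apply add_nonneg
  all_goals exact mul_nonneg (mul_nonneg (by norm_num) (pow_nonneg ht0 _)) (pow_nonneg hu _)

set_option maxHeartbeats 1000000 in
lemma c_s2ud' (t : ℝ) (ht0 : 0 ≤ t) (hu : 0 ≤ 1 - t) : 0 ≤ (4043/12288000000)*t^5 + (52947/65536000000)*t^6 + (2297033/4718592000000)*t^7 + (775/38654705664)*t^8 + (7215335437/7247757312000000)*t^9 + (-355/3710851743744)*t^10 + (13/1649267441664)*t^11 + (1565/7599824371187712)*t^12 + (-1615/182395784908505088)*t^13 + (-775/2918332558536081408)*t^14 + (125/23346660468288651264)*t^15 + (625/2988372539940947361792)*t^16 := by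
  have e : (4043/12288000000)*t^5 + (52947/65536000000)*t^6 + (2297033/4718592000000)*t^7 + (775/38654705664)*t^8 + (7215335437/7247757312000000)*t^9 + (-355/3710851743744)*t^10 + (13/1649267441664)*t^11 + (1565/7599824371187712)*t^12 + (-1615/182395784908505088)*t^13 + (-775/2918332558536081408)*t^14 + (125/23346660468288651264)*t^15 + (625/2988372539940947361792)*t^16 = (4043/12288000000) * t^5 * (1 - t)^11 + (870409/196608000000) * t^6 * (1 - t)^10 + (125807033/4718592000000) * t^7 * (1 - t)^9 + (57405524671/603979776000000) * t^8 * (1 - t)^8 + (324998721929/1449551462400000) * t^9 * (1 - t)^7 + (858341778277/2319282339840000) * t^10 * (1 - t)^6 + (33936169607143/77309411328000000) * t^11 * (1 - t)^5 + (44627598284052997/118747255799808000000) * t^12 * (1 - t)^4 + (650050430142141977/2849934139195392000000) * t^13 * (1 - t)^3 + (852180335520949117/9119789245425254400000) * t^14 * (1 - t)^2 + (8466112991972601589/364791569817010176000000) * t^15 * (1 - t)^1 + (41077988225230110163/15564440312192434176000000) * t^16 * (1 - t)^0 := by ring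
  rw [e]
  repeat' apply add_nonneg
  all_goals exact mul_nonneg (mul_nonneg (by norm_num) (pow_nonneg ht0 _)) (pow_nonneg hu _)

set_option maxHeartbeats 1000000 in
lemma c_c2ud' (t : ℝ) (ht0 : 0 ≤ t) (hu : 0 ≤ 1 - t) : 0 ≤ (1747/3072000000)*t^5 + (6941/14745600000)*t^6 + (35/75497472)*t^7 + (298880513/301989888000000)*t^8 + (200935967/201326592000000)*t^9 + (-23/231928233984)*t^10 + (-5/1855425871872)*t^11 + (415/3799912185593856)*t^12 + (275/30399297484750848)*t^13 + (575/1459166279268040704)*t^14 + (125/11673330234144325632)*t^15 + (625/2988372539940947361792)*t^16 := by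
  have e : (1747/3072000000)*t^5 + (6941/14745600000)*t^6 + (35/75497472)*t^7 + (298880513/301989888000000)*t^8 + (200935967/201326592000000)*t^9 + (-23/231928233984)*t^10 + (-5/1855425871872)*t^11 + (415/3799912185593856)*t^12 + (275/30399297484750848)*t^13 + (575/1459166279268040704)*t^14 + (125/11673330234144325632)*t^15 + (625/2988372539940947361792)*t^16 = (1747/3072000000) * t^5 * (1 - t)^11 + (495913/73728000000) * t^6 * (1 - t)^10 + (2866421/78643200000) * t^7 * (1 - t)^9 + (36292325633/301989888000000) * t^8 * (1 - t)^8 + (162927777389/603979776000000) * t^9 * (1 - t)^7 + (1577194074307/3623878656000000) * t^10 * (1 - t)^6 + (14963651443507/28991029248000000) * t^11 * (1 - t)^5 + (5333401446490603/11874725579980800000) * t^12 * (1 - t)^4 + (14757075118334963/52776558133248000000) * t^13 * (1 - t)^3 + (2686203497496495719/22799473113563136000000) * t^14 * (1 - t)^2 + (5478889539015971413/182395784908505088000000) * t^15 * (1 - t)^1 + (162990273130094698489/46693320936577302528000000) * t^16 * (1 - t)^0 := by ring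
  rw [e]
  repeat' apply add_nonneg
  all_goals exact mul_nonneg (mul_nonneg (by norm_num) (pow_nonneg ht0 _)) (pow_nonneg hu _)

set_option maxHeartbeats 1000000 in
lemma c_s2l' (t : ℝ) (ht0 : 0 ≤ t) (hu : 0 ≤ 1 - t) : 0 ≤ (1/2)*t + (-1/48)*t^3 + (-5/98304)*t^4 + (247/1000000)*t^5 + (-1/500000)*t^6 + (-1/500000)*t^7 + (-1/1000000)*t^9 := by
  have e : (1/2)*t + (-1/48)*t^3 + (-5/98304)*t^4 + (247/1000000)*t^5 + (-1/500000)*t^6 + (-1/500000)*t^7 + (-1/1000000)*t^9 = (1/2) * t^1 * (1 - t)^8 + (4) * t^2 * (1 - t)^7 + (671/48) * t^3 * (1 - t)^6 + (2740219/98304) * t^4 * (1 - t)^5 + (53279988767/1536000000) * t^5 * (1 - t)^4 + (7061455541/256000000) * t^6 * (1 - t)^3 + (10512741407/768000000) * t^7 * (1 - t)^2 + (5953111583/1536000000) * t^8 * (1 - t)^1 + (736293587/1536000000) * t^9 * (1 - t)^0 := by ring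
  rw [e]
  repeat' apply add_nonneg
  all_goals exact mul_nonneg (mul_nonneg (by norm_num) (pow_nonneg ht0 _)) (pow_nonneg hu _)

set_option maxHeartbeats 1000000 in
lemma c_vld' (t : ℝ) (ht0 : 0 ≤ t) (hu : 0 ≤ 1 - t) : 0 ≤ (211/768000000)*t^5 + (1/18000000)*t^6 + (4397/18432000000)*t^7 + (6369581/15099494400000)*t^8 + (52013/24576000000)*t^9 + (-328494419/192000000000000)*t^10 + (-301267/192000000000000)*t^11 + (1907/23437500000)*t^12 + (84269/384000000000000)*t^13 + (-49/50000000000)*t^14 + (1/125000000000)*t^15 + (1/125000000000)*t^16 + (1/500000000000)*t^18 := by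
  have e : (211/768000000)*t^5 + (1/18000000)*t^6 + (4397/18432000000)*t^7 + (6369581/15099494400000)*t^8 + (52013/24576000000)*t^9 + (-328494419/192000000000000)*t^10 + (-301267/192000000000000)*t^11 + (1907/23437500000)*t^12 + (84269/384000000000000)*t^13 + (-49/50000000000)*t^14 + (1/125000000000)*t^15 + (1/125000000000)*t^16 + (1/500000000000)*t^18 = (211/768000000) * t^5 * (1 - t)^13 + (8357/2304000000) * t^6 * (1 - t)^12 + (411677/18432000000) * t^7 * (1 - t)^11 + (1287807277/15099494400000) * t^8 * (1 - t)^10 + (8611099493/37748736000000) * t^9 * (1 - t)^9 + (179609532164263/393216000000000000) * t^10 * (1 - t)^8 + (34765131883661/49152000000000000) * t^11 * (1 - t)^7 + (167417220658907/196608000000000000) * t^12 * (1 - t)^6 + (15441941484601/19660800000000000) * t^13 * (1 - t)^5 + (7068948591221/13107200000000000) * t^14 * (1 - t)^4 + (38975333581991/147456000000000000) * t^15 * (1 - t)^3 + (4089553223741/47185920000000000) * t^16 * (1 - t)^2 + (9977258318221/589824000000000000) * t^17 * (1 - t)^1 + (1740273326569/1179648000000000000) * t^18 * (1 - t)^0 :=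 by ring
  rw [e]
  repeat' apply add_nonneg
  all_goals exact mul_nonneg (mul_nonneg (by norm_num) (pow_nonneg ht0 _)) (pow_nonneg hu _)

set_option maxHeartbeats 1000000 in
lemma c_vl' (t : ℝ) (ht0 : 0 ≤ t) (hu : 0 ≤ 1 - t) : 0 ≤ (1/2)*t^2 + (-1/24)*t^4 + (-51/500000)*t^5 + (681/500000)*t^6 + (-1/40000)*t^8 + (-1/500000)*t^9 := by
  have e : (1/2)*t^2 + (-1/24)*t^4 + (-51/500000)*t^5 + (681/500000)*t^6 + (-1/40000)*t^8 + (-1/500000)*t^9 = (1/2) * t^2 * (1 - t)^7 + (7/2) * t^3 * (1 - t)^6 + (251/24) * t^4 * (1 - t)^5 + (25937347/1500000) * t^5 * (1 - t)^4 + (25626431/1500000) * t^6 * (1 - t)^3 + (15130211/1500000) * t^7 * (1 - t)^2 + (9885959/3000000) * t^8 * (1 - t)^1 + (1378699/3000000) * t^9 * (1 - t)^0 := by ring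
  rw [e]
  repeat' apply add_nonneg
  all_goals exact mul_nonneg (mul_nonneg (by norm_num) (pow_nonneg ht0 _)) (pow_nonneg hu _)

set_option maxHeartbeats 1000000 in
lemma c_vlh' (t : ℝ) (ht0 : 0 ≤ t) (hu : 0 ≤ 1 - t) : 0 ≤ (1/2) + (-1/2)*t^2 + (1/24)*t^4 + (51/500000)*t^5 + (-681/500000)*t^6 + (1/40000)*t^8 + (1/500000)*t^9 := by
  have e : (1/2) + (-1/2)*t^2 + (1/24)*t^4 + (51/500000)*t^5 + (-681/500000)*t^6 + (1/40000)*t^8 + (1/500000)*t^9 = (1/2) * t^0 * (1 - t)^9 + (9/2) * t^1 * (1 - t)^8 + (35/2) * t^2 * (1 - t)^7 + (77/2) * t^3 * (1 - t)^6 + (1261/24) * t^4 * (1 - t)^5 + (68562653/1500000) * t^5 * (1 - t)^4 + (37373569/1500000) * t^6 * (1 - t)^3 + (11869789/1500000) * t^7 * (1 - t)^2 + (3614041/3000000) * t^8 * (1 - t)^1 + (121301/3000000) * t^9 * (1 - t)^0 := by ring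
  rw [e]
  repeat' apply add_nonneg
  all_goals exact mul_nonneg (mul_nonneg (by norm_num) (pow_nonneg ht0 _)) (pow_nonneg hu _)

set_option maxHeartbeats 1000000 in
lemma c_elld' (t : ℝ) (ht0 : 0 ≤ t) (hu : 0 ≤ 1 - t) : 0 ≤ (1/1500000)*t^6 + (7/9000000)*t^8 + (16629/2000000)*t^9 + (-18310601591/2250000000000)*t^10 + (-2409731/125000000000)*t^11 + (14907106411/10125000000000)*t^12 + (76793/15625000000)*t^13 + (-1046966681/6750000000000)*t^14 + (-196905757651/187500000000000000)*t^15 + (56927013536261/5062500000000000000)*t^16 + (20652001227/125000000000000000)*t^17 + (-1354175744509/2250000000000000000)*t^18 + (-24880493869/1500000000000000000)*t^19 + (82995835365910427/3375000000000000000000000)*t^20 + (948468023258563/843750000000000000000000)*t^21 + (-145167096506251/187500000000000000000000)*t^22 + (-3385727825307/62500000000000000000000)*t^23 + (276786172429/15000000000000000000000)*t^24 + (355758930667/187500000000000000000000)*t^25 + (-234711436283/750000000000000000000000)*t^26 + (-18122796317/375000000000000000000000)*t^27 + (2276295961/750000000000000000000000)*t^28 + (215216631/250000000000000000000000)*t^29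 + (1365757/250000000000000000000000)*t^30 + (-142307/15000000000000000000000)*t^31 + (-1240511/2000000000000000000000000)*t^32 + (10177/250000000000000000000000)*t^33 + (3/400000000000000000000)*t^34 + (1/2500000000000000000000)*t^35 + (1/125000000000000000000000)*t^36 := by
  have e : (1/1500000)*t^6 + (7/9000000)*t^8 + (16629/2000000)*t^9 + (-18310601591/2250000000000)*t^10 + (-2409731/125000000000)*t^11 + (14907106411/10125000000000)*t^12 + (76793/15625000000)*t^13 + (-1046966681/6750000000000)*t^14 + (-196905757651/187500000000000000)*t^15 + (56927013536261/5062500000000000000)*t^16 + (20652001227/125000000000000000)*t^17 + (-1354175744509/2250000000000000000)*t^18 + (-24880493869/1500000000000000000)*t^19 + (82995835365910427/3375000000000000000000000)*t^20 + (948468023258563/843750000000000000000000)*t^21 + (-145167096506251/187500000000000000000000)*t^22 + (-3385727825307/62500000000000000000000)*t^23 + (276786172429/15000000000000000000000)*t^24 + (355758930667/187500000000000000000000)*t^25 + (-234711436283/750000000000000000000000)*t^26 + (-18122796317/375000000000000000000000)*t^27 + (2276295961/750000000000000000000000)*t^28 + (215216631/250000000000000000000000)*t^29 + (1365757/250000000000000000000000)*t^30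 + (-142307/15000000000000000000000)*t^31 + (-1240511/2000000000000000000000000)*t^32 + (10177/250000000000000000000000)*t^33 + (3/400000000000000000000)*t^34 + (1/2500000000000000000000)*t^35 + (1/125000000000000000000000)*t^36 = (1/1500000) * t^6 * (1 - t)^30 + (1/50000) * t^7 * (1 - t)^29 + (2617/9000000) * t^8 * (1 - t)^28 + (198773/18000000) * t^9 * (1 - t)^27 + (528564273409/2250000000000) * t^10 * (1 - t)^26 + (1577437339619/562500000000) * t^11 * (1 - t)^25 + (447278217023597/20250000000000) * t^12 * (1 - t)^24 + (53250646442197/421875000000) * t^13 * (1 - t)^23 + (3740328599931641/6750000000000) * t^14 * (1 - t)^22 + (9816427812699006043423/5062500000000000000) * t^15 * (1 - t)^21 + (438771944500861299971/79101562500000000) * t^16 * (1 - t)^20 + (133714467929258115787487/10125000000000000000) * t^17 * (1 - t)^19 + (107367696109163850128969/4050000000000000000) * t^18 * (1 - t)^18 + (611515489211519945072963/13500000000000000000) * t^19 * (1 - t)^17 + (74621439511725217960503386809/1125000000000000000000000) * t^20 * (1 - t)^16 + (211695792368536264180374200813/2531250000000000000000000) * t^21 * (1 - t)^15 + (17074586289388372764494425139/187500000000000000000000)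 * t^22 * (1 - t)^14 + (46303439898707314228413007/540000000000000000000) * t^23 * (1 - t)^13 + (706858414981743763826670261019/10125000000000000000000000) * t^24 * (1 - t)^12 + (248410596942358805846406489679/5062500000000000000000000) * t^25 * (1 - t)^11 + (600982843278179630133315594731/20250000000000000000000000) * t^26 * (1 - t)^10 + (38905008137357012594078986057/2531250000000000000000000) * t^27 * (1 - t)^9 + (182715948134790103123018987/27000000000000000000000) * t^28 * (1 - t)^8 + (1128776871461583021699703499/450000000000000000000000) * t^29 * (1 - t)^7 + (3909716812903262893348706741/5062500000000000000000000) * t^30 * (1 - t)^6 + (1308593252587624411681534889/6750000000000000000000000) * t^31 * (1 - t)^5 + (695640267420806048237819689/18000000000000000000000000) * t^32 * (1 - t)^4 + (238253169404359485666822053/40500000000000000000000000) * t^33 * (1 - t)^3 + (51997864868136692754818399/81000000000000000000000000) * t^34 * (1 - t)^2 + (1810086367905461814003941/40500000000000000000000000) * t^35 * (1 - t)^1 + (241461516177747760625201/162000000000000000000000000) * t^36 * (1 - t)^0 := by ring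
  rw [e]
  repeat' apply add_nonneg
  all_goals exact mul_nonneg (mul_nonneg (by norm_num) (pow_nonneg ht0 _)) (pow_nonneg hu _)

set_option maxHeartbeats 1000000 in
lemma c_ell' (t : ℝ) (ht0 : 0 ≤ t) (hu : 0 ≤ 1 - t) : 0 ≤ (1)*t^2 + (1/6)*t^4 + (-51/250000)*t^5 + (4439/100000)*t^6 + (-51/500000)*t^7 + (1683/125000)*t^8 + (-8361/1000000)*t^9 := by
  have e : (1)*t^2 + (1/6)*t^4 + (-51/250000)*t^5 + (4439/100000)*t^6 + (-51/500000)*t^7 + (1683/125000)*t^8 + (-8361/1000000)*t^9 = (1) * t^2 * (1 - t)^7 + (7) * t^3 * (1 - t)^6 + (127/6) * t^4 * (1 - t)^5 + (26874847/750000) * t^5 * (1 - t)^4 + (55065361/1500000) * t^6 * (1 - t)^3 + (17098883/750000) * t^7 * (1 - t)^2 + (11968421/1500000) * t^8 * (1 - t)^1 + (3647561/3000000) * t^9 * (1 - t)^0 := by ring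
  rw [e]
  repeat' apply add_nonneg
  all_goals exact mul_nonneg (mul_nonneg (by norm_num) (pow_nonneg ht0 _)) (pow_nonneg hu _)

set_option maxHeartbeats 1000000 in
lemma c_pld' (t : ℝ) (ht0 : 0 ≤ t) (hu : 0 ≤ 1 - t) : 0 ≤ (211/768000000)*t^5 + (17/18000000)*t^6 + (4397/18432000000)*t^7 + (56232479/75497472000000)*t^8 + (76519/24576000000)*t^9 + (-142078863/64000000000000)*t^10 + (-723667/384000000000000)*t^11 + (63277/750000000000)*t^12 + (-75053/384000000000000)*t^13 + (-523/500000000000)*t^14 + (-1/125000000000)*t^15 + (1/250000000000)*t^16 + (-1/500000000000)*t^18 := by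
  have e : (211/768000000)*t^5 + (17/18000000)*t^6 + (4397/18432000000)*t^7 + (56232479/75497472000000)*t^8 + (76519/24576000000)*t^9 + (-142078863/64000000000000)*t^10 + (-723667/384000000000000)*t^11 + (63277/750000000000)*t^12 + (-75053/384000000000000)*t^13 + (-523/500000000000)*t^14 + (-1/125000000000)*t^15 + (1/250000000000)*t^16 + (-1/500000000000)*t^18 = (211/768000000) * t^5 * (1 - t)^13 + (2081/460800000) * t^6 * (1 - t)^12 + (121657/3686400000) * t^7 * (1 - t)^11 + (3630868661/25165824000000) * t^8 * (1 - t)^10 + (5384212873/12582912000000) * t^9 * (1 - t)^9 + (361668394731353/393216000000000000) * t^10 * (1 - t)^8 + (72837425258227/49152000000000000) * t^11 * (1 - t)^7 + (118632987845559/65536000000000000) * t^12 * (1 - t)^6 + (54655517367457/32768000000000000) * t^13 * (1 - t)^5 + (223579219641637/196608000000000000) * t^14 * (1 - t)^4 + (81680214910681/147456000000000000) * t^15 * (1 - t)^3 + (8566470190019/47185920000000000) * t^16 * (1 - t)^2 + (2341428869019/65536000000000000) * t^17 * (1 - t)^1 + (1249398113117/393216000000000000) * t^18 * (1 - t)^0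 := by ring
  rw [e]
  repeat' apply add_nonneg
  all_goals exact mul_nonneg (mul_nonneg (by norm_num) (pow_nonneg ht0 _)) (pow_nonneg hu _)

set_option maxHeartbeats 1000000 in
lemma c_pl' (t : ℝ) (ht0 : 0 ≤ t) (hu : 0 ≤ 1 - t) : 0 ≤ (1) + (-1/2)*t^2 + (1/24)*t^4 + (-51/500000)*t^5 + (-1391/1000000)*t^6 + (23/1000000)*t^8 + (-3/1000000)*t^9 := by
  have e : (1) + (-1/2)*t^2 + (1/24)*t^4 + (-51/500000)*t^5 + (-1391/1000000)*t^6 + (23/1000000)*t^8 + (-3/1000000)*t^9 = (1) * t^0 * (1 - t)^9 + (9) * t^1 * (1 - t)^8 + (71/2) * t^2 * (1 - t)^7 + (161/2) * t^3 * (1 - t)^6 + (2773/24) * t^4 * (1 - t)^5 + (163062347/1500000) * t^5 * (1 - t)^4 + (200744603/3000000) * t^6 * (1 - t)^3 + (15547129/600000) * t^7 * (1 - t)^2 + (8555663/1500000) * t^8 * (1 - t)^1 + (1620581/3000000) * t^9 * (1 - t)^0 := by ring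
  rw [e]
  repeat' apply add_nonneg
  all_goals exact mul_nonneg (mul_nonneg (by norm_num) (pow_nonneg ht0 _)) (pow_nonneg hu _)

set_option maxHeartbeats 1000000 in
lemma c_sud' (t : ℝ) (ht0 : 0 ≤ t) (hu : 0 ≤ 1 - t) : 0 ≤ (1/2000000)*t^5 + (4397/6144000000)*t^6 + (109/144000000)*t^7 + (93907/294912000000)*t^8 + (43327/24576000000)*t^9 + (-785251421/768000000000000)*t^10 + (304601/1000000000000)*t^11 + (10669297/256000000000000)*t^12 + (-1500687/256000000000000)*t^13 + (-289/500000000000)*t^14 + (7/250000000000)*t^15 + (1/500000000000)*t^16 + (-1/500000000000)*t^17 + (-1/500000000000)*t^18 := by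
  have e : (1/2000000)*t^5 + (4397/6144000000)*t^6 + (109/144000000)*t^7 + (93907/294912000000)*t^8 + (43327/24576000000)*t^9 + (-785251421/768000000000000)*t^10 + (304601/1000000000000)*t^11 + (10669297/256000000000000)*t^12 + (-1500687/256000000000000)*t^13 + (-289/500000000000)*t^14 + (7/250000000000)*t^15 + (1/500000000000)*t^16 + (-1/500000000000)*t^17 + (-1/500000000000)*t^18 = (1/2000000) * t^5 * (1 - t)^13 + (44333/6144000000) * t^6 * (1 - t)^12 + (222773/4608000000) * t^7 * (1 - t)^11 + (58651571/294912000000) * t^8 * (1 - t)^10 + (27600019/49152000000) * t^9 * (1 - t)^9 + (1769195137783/1536000000000000) * t^10 * (1 - t)^8 + (4527092449/2560000000000) * t^11 * (1 - t)^7 + (24689762011/12000000000000) * t^12 * (1 - t)^6 + (463813200629/256000000000000) * t^13 * (1 - t)^5 + (914097067691/768000000000000) * t^14 * (1 - t)^4 + (72424631817/128000000000000) * t^15 * (1 - t)^3 + (847837502489/4608000000000000) * t^16 * (1 - t)^2 + (21102548467/576000000000000) * t^17 * (1 - t)^1 + (5178481207/1536000000000000) * t^18 * (1 - t)^0 :=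 by ring
  rw [e]
  repeat' apply add_nonneg
  all_goals exact mul_nonneg (mul_nonneg (by norm_num) (pow_nonneg ht0 _)) (pow_nonneg hu _)

set_option maxHeartbeats 1000000 in
lemma c_pi' (t : ℝ) (ht0 : 0 ≤ t) (hu : 0 ≤ 1 - t) : 0 ≤ (6847267/1953125000) + (28082240109/976562500000)*t + (2339694819/1953125000000)*t^2 + (-1326495319/488281250000)*t^3 + (4541199651/39062500000)*t^4 + (62923661/31250000)*t^5 + (-27293/25000)*t^6 + (3/20)*t^7 := by
  have e : (6847267/1953125000) + (28082240109/976562500000)*t + (2339694819/1953125000000)*t^2 + (-1326495319/488281250000)*t^3 + (4541199651/39062500000)*t^4 + (62923661/31250000)*t^5 + (-27293/25000)*t^6 + (3/20)*t^7 = (6847267/1953125000) * t^0 * (1 - t)^7 + (52047674609/976562500000) * t^1 * (1 - t)^6 + (483119183127/1953125000000) * t^2 * (1 - t)^5 + (1088514041089/1953125000000) * t^3 * (1 - t)^4 + (398044238749/488281250000) * t^4 * (1 - t)^3 + (2795864815477/976562500000) * t^5 * (1 - t)^2 + (6789764246949/1953125000000) * t^6 * (1 - t)^1 + (2380537380811/1953125000000)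 * t^7 * (1 - t)^0 := by ring
  rw [e]
  repeat' apply add_nonneg
  all_goals exact mul_nonneg (mul_nonneg (by norm_num) (pow_nonneg ht0 _)) (pow_nonneg hu _)

set_option maxHeartbeats 1000000 in
lemma c_q' (t : ℝ) (ht0 : 0 ≤ t) (hu : 0 ≤ 1 - t) : 0 ≤ (1) + (477/500)*t + (607/1000)*t^2 + (161/500)*t^3 + (3/20)*t^4 := by
  have e : (1) + (477/500)*t + (607/1000)*t^2 + (161/500)*t^3 + (3/20)*t^4 = (1) * t^0 * (1 - t)^4 + (2477/500) * t^1 * (1 - t)^3 + (9469/1000) * t^2 * (1 - t)^2 + (4199/500) * t^3 * (1 - t)^1 + (3033/1000) * t^4 * (1 - t)^0 := by ring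
  rw [e]
  repeat' apply add_nonneg
  all_goals exact mul_nonneg (mul_nonneg (by norm_num) (pow_nonneg ht0 _)) (pow_nonneg hu _)

set_option maxHeartbeats 1000000 in
lemma c_key' (t : ℝ) (ht0 : 0 ≤ t) (hu : 0 ≤ 1 - t) : 0 ≤ (75586054631/76800000000)*t^7 + (78072901/180000000)*t^8 + (32587759/75000000)*t^9 + (800593009603/18750000000000)*t^10 + (-5371835025601/11250000000000)*t^11 + (-251153854902263/675000000000000)*t^12 + (1939735316011/14062500000000)*t^13 + (-41945341535543/1125000000000000)*t^14 + (-2631082334026457777/84375000000000000000)*t^15 + (-1218458354768260559/56250000000000000000)*t^16 + (-1871440362320264303/337500000000000000000)*t^17 + (-1470836966936745997/675000000000000000000)*t^18 + (676056686157422539/281250000000000000000)*t^19 + (-51795866426519773/140625000000000000000)*t^20 + (-222303097332288481/562500000000000000000)*t^21 + (83792063566983707/562500000000000000000)*t^22 + (1416815184774503/23437500000000000000)*t^23 + (41087215886249111/1500000000000000000000)*t^24 + (232628221688307/31250000000000000000)*t^25 + (645766321866931/500000000000000000000)*t^26 + (-2601992427325821/500000000000000000000)*t^27 + (-38913414531129/125000000000000000000)*t^28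 + (441153296998587/1000000000000000000000)*t^29 + (753306260139/62500000000000000000)*t^30 + (-14277697592391/1000000000000000000000)*t^31 + (-251176620087/1000000000000000000000)*t^32 + (68740638741/250000000000000000000)*t^33 + (-629156889/20000000000000000000)*t^34 := by
  have e : (75586054631/76800000000)*t^7 + (78072901/180000000)*t^8 + (32587759/75000000)*t^9 + (800593009603/18750000000000)*t^10 + (-5371835025601/11250000000000)*t^11 + (-251153854902263/675000000000000)*t^12 + (1939735316011/14062500000000)*t^13 + (-41945341535543/1125000000000000)*t^14 + (-2631082334026457777/84375000000000000000)*t^15 + (-1218458354768260559/56250000000000000000)*t^16 + (-1871440362320264303/337500000000000000000)*t^17 + (-1470836966936745997/675000000000000000000)*t^18 + (676056686157422539/281250000000000000000)*t^19 + (-51795866426519773/140625000000000000000)*t^20 + (-222303097332288481/562500000000000000000)*t^21 + (83792063566983707/562500000000000000000)*t^22 + (1416815184774503/23437500000000000000)*t^23 + (41087215886249111/1500000000000000000000)*t^24 + (232628221688307/31250000000000000000)*t^25 + (645766321866931/500000000000000000000)*t^26 + (-2601992427325821/500000000000000000000)*t^27 + (-38913414531129/125000000000000000000)*t^28 + (441153296998587/1000000000000000000000)*t^29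 + (753306260139/62500000000000000000)*t^30 + (-14277697592391/1000000000000000000000)*t^31 + (-251176620087/1000000000000000000000)*t^32 + (68740638741/250000000000000000000)*t^33 + (-629156889/20000000000000000000)*t^34 = (75586054631/76800000000) * t^7 * (1 - t)^27 + (6222403738391/230400000000) * t^8 * (1 - t)^26 + (82290491267371/230400000000) * t^9 * (1 - t)^25 + (10910289590330109401/3600000000000000) * t^10 * (1 - t)^24 + (33356182491006826027/1800000000000000) * t^11 * (1 - t)^23 + (93893159999251453399/1080000000000000) * t^12 * (1 - t)^22 + (1756708763589753190307/5400000000000000) * t^13 * (1 - t)^21 + (8968167031779813955471/9000000000000000) * t^14 * (1 - t)^20 + (143116236635799251701845857/56250000000000000000) * t^15 * (1 - t)^19 + (77151943591555517541483931/14062500000000000000) * t^16 * (1 - t)^18 + (3403915842104587600769319607/337500000000000000000) * t^17 * (1 - t)^17 + (3580327270754816078853752191/225000000000000000000) * t^18 * (1 - t)^16 + (18263404600166556172244243477/843750000000000000000) * t^19 * (1 - t)^15 + (21478192517971192630864025807/843750000000000000000) * t^20 * (1 - t)^14 + (43725285780966067720797839123/1687500000000000000000) * t^21 * (1 - t)^13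 + (19254903664273130702785412873/843750000000000000000) * t^22 * (1 - t)^12 + (2929071122439315663551078567/168750000000000000000) * t^23 * (1 - t)^11 + (5680897301723189779299652637/500000000000000000000) * t^24 * (1 - t)^10 + (42973206620063602118722983319/6750000000000000000000) * t^25 * (1 - t)^9 + (10228843293691526710915495759/3375000000000000000000) * t^26 * (1 - t)^8 + (606600953349100589583228547/500000000000000000000) * t^27 * (1 - t)^7 + (5435645804348527289585466821/13500000000000000000000) * t^28 * (1 - t)^6 + (2933888748250419438294119227/27000000000000000000000) * t^29 * (1 - t)^5 + (125282659613431893521938007/5400000000000000000000) * t^30 * (1 - t)^4 + (33863192128308366411257633/9000000000000000000000) * t^31 * (1 - t)^3 + (1172390472920082858714191/2700000000000000000000) * t^32 * (1 - t)^2 + (142369111636344223079723/4500000000000000000000) * t^33 * (1 - t)^1 + (29363073589568053790743/27000000000000000000000) * t^34 * (1 - t)^0 := by ring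
  rw [e]
  repeat' apply add_nonneg
  all_goals exact mul_nonneg (mul_nonneg (by norm_num) (pow_nonneg ht0 _)) (pow_nonneg hu _)

set_option maxHeartbeats 2000000 in
theorem stmt_11 (t : ℝ) (h1 : 0 < t) (h2 : t ≤ 1) :
    (1 / t^3 + 1 / (π - t)^3) * (-2 * Real.log (Real.cos t))^2 * (Real.cos t / Real.sin t) ≥ 1 := by
  have ht0 : (0:ℝ) ≤ t := h1.le
  have hu : (0:ℝ) ≤ 1 - t := by linarith only [h2]
  have hpi1 := Real.pi_gt_d6
  have hpi2 := Real.pi_lt_d6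
  have c_s8l : 0 ≤ (1/8)*t + (-1/3072)*t^3 + (-5/393216)*t^4 := c_s8l' t ht0 hu
  have c_c8l : 0 ≤ (1) + (-1/128)*t^2 + (-5/393216)*t^4 := c_c8l' t ht0 hu
  have c_s4l : 0 ≤ (1/4)*t + (-1/384)*t^3 + (-5/196608)*t^4 + (1/524288)*t^5 + (5/25165824)*t^6 + (5/603979776)*t^7 + (25/77309411328)*t^8 := c_s4l' t ht0 hu
  have c_c4l : 0 ≤ (1) + (-1/32)*t^2 + (1/6144)*t^4 + (-5/786432)*t^5 + (-1/4718592)*t^6 + (5/301989888)*t^7 + (-25/77309411328)*t^8 := c_c4l' t ht0 hu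
  have c_s2ld : 0 ≤ (3913/4096000000)*t^5 + (52947/65536000000)*t^6 + (4452809/4718592000000)*t^7 + (275/12884901888)*t^8 + (7257679187/7247757312000000)*t^9 + (-205/3710851743744)*t^10 + (1/4947802324992)*t^11 + (-35/7599824371187712)*t^12 + (-415/182395784908505088)*t^13 + (25/2918332558536081408)*t^14 + (125/23346660468288651264)*t^15 + (-625/2988372539940947361792)*t^16 := c_s2ld' t ht0 hu
  have c_s2ud : 0 ≤ (4043/12288000000)*t^5 + (52947/65536000000)*t^6 + (2297033/4718592000000)*t^7 + (775/38654705664)*t^8 + (7215335437/7247757312000000)*t^9 + (-355/3710851743744)*t^10 + (13/1649267441664)*t^11 + (1565/7599824371187712)*t^12 + (-1615/182395784908505088)*t^13 + (-775/2918332558536081408)*t^14 + (125/23346660468288651264)*t^15 + (625/2988372539940947361792)*t^16 := c_s2ud' t ht0 hu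
  have c_c2ud : 0 ≤ (1747/3072000000)*t^5 + (6941/14745600000)*t^6 + (35/75497472)*t^7 + (298880513/301989888000000)*t^8 + (200935967/201326592000000)*t^9 + (-23/231928233984)*t^10 + (-5/1855425871872)*t^11 + (415/3799912185593856)*t^12 + (275/30399297484750848)*t^13 + (575/1459166279268040704)*t^14 + (125/11673330234144325632)*t^15 + (625/2988372539940947361792)*t^16 := c_c2ud' t ht0 hu
  have c_s2l : 0 ≤ (1/2)*t + (-1/48)*t^3 + (-5/98304)*t^4 + (247/1000000)*t^5 + (-1/500000)*t^6 + (-1/500000)*t^7 + (-1/1000000)*t^9 := c_s2l' t ht0 hu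
  have c_vld : 0 ≤ (211/768000000)*t^5 + (1/18000000)*t^6 + (4397/18432000000)*t^7 + (6369581/15099494400000)*t^8 + (52013/24576000000)*t^9 + (-328494419/192000000000000)*t^10 + (-301267/192000000000000)*t^11 + (1907/23437500000)*t^12 + (84269/384000000000000)*t^13 + (-49/50000000000)*t^14 + (1/125000000000)*t^15 + (1/125000000000)*t^16 + (1/500000000000)*t^18 := c_vld' t ht0 hu
  have c_vl : 0 ≤ (1/2)*t^2 + (-1/24)*t^4 + (-51/500000)*t^5 + (681/500000)*t^6 + (-1/40000)*t^8 + (-1/500000)*t^9 := c_vl' t ht0 hu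
  have c_vlh : 0 ≤ (1/2) + (-1/2)*t^2 + (1/24)*t^4 + (51/500000)*t^5 + (-681/500000)*t^6 + (1/40000)*t^8 + (1/500000)*t^9 := c_vlh' t ht0 hu
  have c_elld : 0 ≤ (1/1500000)*t^6 + (7/9000000)*t^8 + (16629/2000000)*t^9 + (-18310601591/2250000000000)*t^10 + (-2409731/125000000000)*t^11 + (14907106411/10125000000000)*t^12 + (76793/15625000000)*t^13 + (-1046966681/6750000000000)*t^14 + (-196905757651/187500000000000000)*t^15 + (56927013536261/5062500000000000000)*t^16 + (20652001227/125000000000000000)*t^17 + (-1354175744509/2250000000000000000)*t^18 + (-24880493869/1500000000000000000)*t^19 + (82995835365910427/3375000000000000000000000)*t^20 + (948468023258563/843750000000000000000000)*t^21 + (-145167096506251/187500000000000000000000)*t^22 + (-3385727825307/62500000000000000000000)*t^23 + (276786172429/15000000000000000000000)*t^24 + (355758930667/187500000000000000000000)*t^25 + (-234711436283/750000000000000000000000)*t^26 + (-18122796317/375000000000000000000000)*t^27 + (2276295961/750000000000000000000000)*t^28 + (215216631/250000000000000000000000)*t^29 + (1365757/250000000000000000000000)*t^30 + (-142307/15000000000000000000000)*t^31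 + (-1240511/2000000000000000000000000)*t^32 + (10177/250000000000000000000000)*t^33 + (3/400000000000000000000)*t^34 + (1/2500000000000000000000)*t^35 + (1/125000000000000000000000)*t^36 := c_elld' t ht0 hu
  have c_ell : 0 ≤ (1)*t^2 + (1/6)*t^4 + (-51/250000)*t^5 + (4439/100000)*t^6 + (-51/500000)*t^7 + (1683/125000)*t^8 + (-8361/1000000)*t^9 := c_ell' t ht0 hu
  have c_pld : 0 ≤ (211/768000000)*t^5 + (17/18000000)*t^6 + (4397/18432000000)*t^7 + (56232479/75497472000000)*t^8 + (76519/24576000000)*t^9 + (-142078863/64000000000000)*t^10 + (-723667/384000000000000)*t^11 + (63277/750000000000)*t^12 + (-75053/384000000000000)*t^13 + (-523/500000000000)*t^14 + (-1/125000000000)*t^15 + (1/250000000000)*t^16 + (-1/500000000000)*t^18 := c_pld' t ht0 hu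
  have c_pl : 0 ≤ (1) + (-1/2)*t^2 + (1/24)*t^4 + (-51/500000)*t^5 + (-1391/1000000)*t^6 + (23/1000000)*t^8 + (-3/1000000)*t^9 := c_pl' t ht0 hu
  have c_sud : 0 ≤ (1/2000000)*t^5 + (4397/6144000000)*t^6 + (109/144000000)*t^7 + (93907/294912000000)*t^8 + (43327/24576000000)*t^9 + (-785251421/768000000000000)*t^10 + (304601/1000000000000)*t^11 + (10669297/256000000000000)*t^12 + (-1500687/256000000000000)*t^13 + (-289/500000000000)*t^14 + (7/250000000000)*t^15 + (1/500000000000)*t^16 + (-1/500000000000)*t^17 + (-1/500000000000)*t^18 := c_sud' t ht0 hu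
  have c_pi : 0 ≤ (6847267/1953125000) + (28082240109/976562500000)*t + (2339694819/1953125000000)*t^2 + (-1326495319/488281250000)*t^3 + (4541199651/39062500000)*t^4 + (62923661/31250000)*t^5 + (-27293/25000)*t^6 + (3/20)*t^7 := c_pi' t ht0 hu
  have c_q : 0 ≤ (1) + (477/500)*t + (607/1000)*t^2 + (161/500)*t^3 + (3/20)*t^4 := c_q' t ht0 hu
  have c_key : 0 ≤ (75586054631/76800000000)*t^7 + (78072901/180000000)*t^8 + (32587759/75000000)*t^9 + (800593009603/18750000000000)*t^10 + (-5371835025601/11250000000000)*t^11 + (-251153854902263/675000000000000)*t^12 + (1939735316011/14062500000000)*t^13 + (-41945341535543/1125000000000000)*t^14 + (-2631082334026457777/84375000000000000000)*t^15 + (-1218458354768260559/56250000000000000000)*t^16 + (-1871440362320264303/337500000000000000000)*t^17 + (-1470836966936745997/675000000000000000000)*t^18 + (676056686157422539/281250000000000000000)*t^19 + (-51795866426519773/140625000000000000000)*t^20 + (-222303097332288481/562500000000000000000)*t^21 + (83792063566983707/562500000000000000000)*t^22 + (1416815184774503/23437500000000000000)*t^23 + (41087215886249111/1500000000000000000000)*t^24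 + (232628221688307/31250000000000000000)*t^25 + (645766321866931/500000000000000000000)*t^26 + (-2601992427325821/500000000000000000000)*t^27 + (-38913414531129/125000000000000000000)*t^28 + (441153296998587/1000000000000000000000)*t^29 + (753306260139/62500000000000000000)*t^30 + (-14277697592391/1000000000000000000000)*t^31 + (-251176620087/1000000000000000000000)*t^32 + (68740638741/250000000000000000000)*t^33 + (-629156889/20000000000000000000)*t^34 := c_key' t ht0 hu
  -- trig positivity
  have hsin8nn : 0 ≤ Real.sin (t/8) := Real.sin_nonneg_of_nonneg_of_le_pi (by linarith only [h1]) (by linarith only [h2, hpi1])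
  have hsin4nn : 0 ≤ Real.sin (t/4) := Real.sin_nonneg_of_nonneg_of_le_pi (by linarith only [h1]) (by linarith only [h2, hpi1])
  have hsin2nn : 0 ≤ Real.sin (t/2) := Real.sin_nonneg_of_nonneg_of_le_pi (by linarith only [h1]) (by linarith only [h2, hpi1])
  have hcos8pos : 0 < Real.cos (t/8) := Real.cos_pos_of_le_one (by rw [abs_of_nonneg (by linarith only [h1] : (0:ℝ) ≤ t/8)]; linarith only [h2])
  have hcos4pos : 0 < Real.cos (t/4) := Real.cos_pos_of_le_one (by rw [abs_of_nonneg (by linarith only [h1] : (0:ℝ) ≤ t/4)]; linarith only [h2])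
  have hcos2pos : 0 < Real.cos (t/2) := Real.cos_pos_of_le_one (by rw [abs_of_nonneg (by linarith only [h1] : (0:ℝ) ≤ t/2)]; linarith only [h2])
  have hcostpos : 0 < Real.cos t := Real.cos_pos_of_le_one (by rw [abs_of_nonneg ht0]; linarith only [h2])
  have hsintpos : 0 < Real.sin t := Real.sin_pos_of_pos_of_le_one h1 h2
  -- sin/cos bounds at t/8
  have h8abs : |t/8| ≤ 1 := by rw [abs_of_nonneg (by linarith only [h1] : (0:ℝ) ≤ t/8)]; linarith only [h2]
  have hsb := Real.sin_bound h8abs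
  have hcb := Real.cos_bound h8abs
  rw [abs_of_nonneg (by linarith only [h1] : (0:ℝ) ≤ t/8), abs_le] at hsb hcb
  have hs8l : (1/8)*t + (-1/3072)*t^3 + (-5/393216)*t^4 ≤ Real.sin (t/8) := by linarith only [hsb.1, mul_le_mul_of_nonneg_left h2 (pow_nonneg ht0 4), pow_nonneg ht0 4]
  have hs8u : Real.sin (t/8) ≤ (1/8)*t + (-1/3072)*t^3 + (5/393216)*t^4 := by linarith only [hsb.2, mul_le_mul_of_nonneg_left h2 (pow_nonneg ht0 4), pow_nonneg ht0 4]
  have hc8l : (1) + (-1/128)*t^2 + (-5/393216)*t^4 ≤ Real.cos (t/8) := by linarith only [hcb.1]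
  have hc8u : Real.cos (t/8) ≤ (1) + (-1/128)*t^2 + (5/393216)*t^4 := by linarith only [hcb.2]
  have hs8unn : 0 ≤ (1/8)*t + (-1/3072)*t^3 + (5/393216)*t^4 := le_trans hsin8nn hs8u
  -- level t/4
  have heq4s : Real.sin (t/4) = 2 * Real.sin (t/8) * Real.cos (t/8) := by
    have h := Real.sin_two_mul (t/8); rw [show 2*(t/8) = t/4 by ring] at h; exact h
  have heq4c : Real.cos (t/4) = 1 - 2 * Real.sin (t/8)^2 := by
    have h := Real.cos_two_mul (t/8); rw [show 2*(t/8) = t/4 by ring] at h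
    have hp := Real.sin_sq_add_cos_sq (t/8); linarith only [h, hp]
  have hm4l : ((1/8)*t + (-1/3072)*t^3 + (-5/393216)*t^4) * ((1) + (-1/128)*t^2 + (-5/393216)*t^4) ≤ Real.sin (t/8) * Real.cos (t/8) :=
    mul_le_mul hs8l hc8l c_c8l hsin8nn
  have hm4u : Real.sin (t/8) * Real.cos (t/8) ≤ ((1/8)*t + (-1/3072)*t^3 + (5/393216)*t^4) * ((1) + (-1/128)*t^2 + (5/393216)*t^4) :=
    mul_le_mul hs8u hc8u hcos8pos.le hs8unn
  have hs4l : (1/4)*t + (-1/384)*t^3 + (-5/196608)*t^4 + (1/524288)*t^5 + (5/25165824)*t^6 + (5/603979776)*t^7 + (25/77309411328)*t^8 ≤ Real.sin (t/4) := by rw [heq4s]; linarith only [hm4l]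
  have hs4u : Real.sin (t/4) ≤ (1/4)*t + (-1/384)*t^3 + (5/196608)*t^4 + (13/1572864)*t^5 + (-5/25165824)*t^6 + (-5/603979776)*t^7 + (25/77309411328)*t^8 := by rw [heq4s]; linarith only [hm4u]
  have hsq8u : Real.sin (t/8)^2 ≤ ((1/8)*t + (-1/3072)*t^3 + (5/393216)*t^4)^2 := pow_le_pow_left₀ hsin8nn hs8u 2
  have hsq8l : ((1/8)*t + (-1/3072)*t^3 + (-5/393216)*t^4)^2 ≤ Real.sin (t/8)^2 := pow_le_pow_left₀ c_s8l hs8l 2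
  have hc4l : (1) + (-1/32)*t^2 + (1/6144)*t^4 + (-5/786432)*t^5 + (-1/4718592)*t^6 + (5/301989888)*t^7 + (-25/77309411328)*t^8 ≤ Real.cos (t/4) := by rw [heq4c]; linarith only [hsq8u]
  have hc4u : Real.cos (t/4) ≤ (1) + (-1/32)*t^2 + (1/6144)*t^4 + (5/786432)*t^5 + (-1/4718592)*t^6 + (-5/301989888)*t^7 + (-25/77309411328)*t^8 := by rw [heq4c]; linarith only [hsq8l]
  have hs4unn : 0 ≤ (1/4)*t + (-1/384)*t^3 + (5/196608)*t^4 + (13/1572864)*t^5 + (-5/25165824)*t^6 + (-5/603979776)*t^7 + (25/77309411328)*t^8 := le_trans hsin4nn hs4u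
  -- level t/2
  have heq2s : Real.sin (t/2) = 2 * Real.sin (t/4) * Real.cos (t/4) := by
    have h := Real.sin_two_mul (t/4); rw [show 2*(t/4) = t/2 by ring] at h; exact h
  have heq2c : Real.cos (t/2) = 1 - 2 * Real.sin (t/4)^2 := by
    have h := Real.cos_two_mul (t/4); rw [show 2*(t/4) = t/2 by ring] at h
    have hp := Real.sin_sq_add_cos_sq (t/4); linarith only [h, hp]
  have hm2l : ((1/4)*t + (-1/384)*t^3 + (-5/196608)*t^4 + (1/524288)*t^5 + (5/25165824)*t^6 + (5/603979776)*t^7 + (25/77309411328)*t^8) * ((1) + (-1/32)*t^2 + (1/6144)*t^4 + (-5/786432)*t^5 + (-1/4718592)*t^6 + (5/301989888)*t^7 + (-25/77309411328)*t^8) ≤ Real.sin (t/4) * Real.cos (t/4) :=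
    mul_le_mul hs4l hc4l c_c4l hsin4nn
  have hm2u : Real.sin (t/4) * Real.cos (t/4) ≤ ((1/4)*t + (-1/384)*t^3 + (5/196608)*t^4 + (13/1572864)*t^5 + (-5/25165824)*t^6 + (-5/603979776)*t^7 + (25/77309411328)*t^8) * ((1) + (-1/32)*t^2 + (1/6144)*t^4 + (5/786432)*t^5 + (-1/4718592)*t^6 + (-5/301989888)*t^7 + (-25/77309411328)*t^8) :=
    mul_le_mul hs4u hc4u hcos4pos.le hs4unn
  have hs2l : (1/2)*t + (-1/48)*t^3 + (-5/98304)*t^4 + (247/1000000)*t^5 + (-1/500000)*t^6 + (-1/500000)*t^7 + (-1/1000000)*t^9 ≤ Real.sin (t/2) := by rw [heq2s]; linarith only [hm2l, c_s2ld]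
  have hs2u : Real.sin (t/2) ≤ (1/2)*t + (-1/48)*t^3 + (5/98304)*t^4 + (261/1000000)*t^5 + (1/500000)*t^6 + (-1/1000000)*t^7 + (1/1000000)*t^9 := by rw [heq2s]; linarith only [hm2u, c_s2ud]
  have hsq4l : ((1/4)*t + (-1/384)*t^3 + (-5/196608)*t^4 + (1/524288)*t^5 + (5/25165824)*t^6 + (5/603979776)*t^7 + (25/77309411328)*t^8)^2 ≤ Real.sin (t/4)^2 := pow_le_pow_left₀ c_s4l hs4l 2
  have hc2u : Real.cos (t/2) ≤ (1) + (-1/8)*t^2 + (1/384)*t^4 + (13/500000)*t^5 + (-3/200000)*t^6 + (1/1000000)*t^8 + (1/1000000)*t^9 := by rw [heq2c]; linarith only [hsq4l, c_c2ud]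
  have hs2unn : 0 ≤ (1/2)*t + (-1/48)*t^3 + (5/98304)*t^4 + (261/1000000)*t^5 + (1/500000)*t^6 + (-1/1000000)*t^7 + (1/1000000)*t^9 := le_trans hsin2nn hs2u
  -- level t
  have heqts : Real.sin t = 2 * Real.sin (t/2) * Real.cos (t/2) := by
    have h := Real.sin_two_mul (t/2); rw [show 2*(t/2) = t by ring] at h; exact h
  have heqtc : Real.cos t = 1 - 2 * Real.sin (t/2)^2 := by
    have h := Real.cos_two_mul (t/2); rw [show 2*(t/2) = t by ring] at h
    have hp := Real.sin_sq_add_cos_sq (t/2); linarith only [h, hp]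
  have hsq2l : ((1/2)*t + (-1/48)*t^3 + (-5/98304)*t^4 + (247/1000000)*t^5 + (-1/500000)*t^6 + (-1/500000)*t^7 + (-1/1000000)*t^9)^2 ≤ Real.sin (t/2)^2 := pow_le_pow_left₀ c_s2l hs2l 2
  have hsq2u : Real.sin (t/2)^2 ≤ ((1/2)*t + (-1/48)*t^3 + (5/98304)*t^4 + (261/1000000)*t^5 + (1/500000)*t^6 + (-1/1000000)*t^7 + (1/1000000)*t^9)^2 := pow_le_pow_left₀ hsin2nn hs2u 2
  have hcoslev : Real.cos t ≤ 1 - ((1/2)*t^2 + (-1/24)*t^4 + (-51/500000)*t^5 + (681/500000)*t^6 + (-1/40000)*t^8 + (-1/500000)*t^9) := by rw [heqtc]; linarith only [hsq2l, c_vld]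
  have hplcos : (1) + (-1/2)*t^2 + (1/24)*t^4 + (-51/500000)*t^5 + (-1391/1000000)*t^6 + (23/1000000)*t^8 + (-3/1000000)*t^9 ≤ Real.cos t := by rw [heqtc]; linarith only [hsq2u, c_pld]
  have hm2t : Real.sin (t/2) * Real.cos (t/2) ≤ ((1/2)*t + (-1/48)*t^3 + (5/98304)*t^4 + (261/1000000)*t^5 + (1/500000)*t^6 + (-1/1000000)*t^7 + (1/1000000)*t^9) * ((1) + (-1/8)*t^2 + (1/384)*t^4 + (13/500000)*t^5 + (-3/200000)*t^6 + (1/1000000)*t^8 + (1/1000000)*t^9) :=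
    mul_le_mul hs2u hc2u hcos2pos.le hs2unn
  have hsule : Real.sin t ≤ (1)*t + (-1/6)*t^3 + (5/49152)*t^4 + (1667/200000)*t^5 + (9/500000)*t^6 + (-19/100000)*t^7 + (-1/1000000)*t^8 + (7/1000000)*t^9 := by rw [heqts]; linarith only [hm2t, c_sud]
  have hsupos : 0 < (1)*t + (-1/6)*t^3 + (5/49152)*t^4 + (1667/200000)*t^5 + (9/500000)*t^6 + (-19/100000)*t^7 + (-1/1000000)*t^8 + (7/1000000)*t^9 := lt_of_lt_of_le hsintpos hsule
  -- logarithm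
  have hlog := aux_log ((1/2)*t^2 + (-1/24)*t^4 + (-51/500000)*t^5 + (681/500000)*t^6 + (-1/40000)*t^8 + (-1/500000)*t^9) c_vl (by linarith only [c_vlh])
  have hloge : Real.log (Real.cos t) ≤ Real.log (1 - ((1/2)*t^2 + (-1/24)*t^4 + (-51/500000)*t^5 + (681/500000)*t^6 + (-1/40000)*t^8 + (-1/500000)*t^9)) :=
    (Real.log_le_log_iff hcostpos (by linarith only [c_vlh])).mpr hcoslev
  have hLge : (1)*t^2 + (1/6)*t^4 + (-51/250000)*t^5 + (4439/100000)*t^6 + (-51/500000)*t^7 + (1683/125000)*t^8 + (-8361/1000000)*t^9 ≤ -2 * Real.log (Real.cos t) := by linarith only [hlog, hloge, c_elld]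
  have hL2 : ((1)*t^2 + (1/6)*t^4 + (-51/250000)*t^5 + (4439/100000)*t^6 + (-51/500000)*t^7 + (1683/125000)*t^8 + (-8361/1000000)*t^9)^2 ≤ (-2 * Real.log (Real.cos t))^2 := pow_le_pow_left₀ c_ell hLge 2
  -- pi bound
  have hpit : 0 < π - t := by linarith only [h2, hpi1]
  have hpicube : (π - t)^3 ≤ ((3927/1250) - t)^3 := pow_le_pow_left₀ hpit.le (by linarith only [hpi2]) 3
  have hpiq : ((1) + (477/500)*t + (607/1000)*t^2 + (161/500)*t^3 + (3/20)*t^4) * (π - t)^3 ≤ 3101/100 := by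
    linarith only [mul_le_mul_of_nonneg_left hpicube c_q, c_pi]
  have hApi : ((1) + (477/500)*t + (607/1000)*t^2 + (161/500)*t^3 + (3/20)*t^4)/(3101/100) ≤ 1/(π - t)^3 := by
    rw [div_le_div_iff₀ (by norm_num) (by positivity)]
    linarith only [hpiq]
  have hA : ((3101/100) + t^3*((1) + (477/500)*t + (607/1000)*t^2 + (161/500)*t^3 + (3/20)*t^4))/((3101/100)*t^3) ≤ 1/t^3 + 1/(π - t)^3 := by
    have he : ((3101/100) + t^3*((1) + (477/500)*t + (607/1000)*t^2 + (161/500)*t^3 + (3/20)*t^4))/((3101/100)*t^3) = 1/t^3 + ((1) + (477/500)*t + (607/1000)*t^2 + (161/500)*t^3 + (3/20)*t^4)/(3101/100) := by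
      field_simp
    rw [he]; linarith only [hApi]
  have hAnn : 0 ≤ ((3101/100) + t^3*((1) + (477/500)*t + (607/1000)*t^2 + (161/500)*t^3 + (3/20)*t^4))/((3101/100)*t^3) := by
    apply div_nonneg _ (by positivity)
    linarith only [mul_nonneg (pow_nonneg ht0 3) c_q]
  have hD : ((1) + (-1/2)*t^2 + (1/24)*t^4 + (-51/500000)*t^5 + (-1391/1000000)*t^6 + (23/1000000)*t^8 + (-3/1000000)*t^9)/((1)*t + (-1/6)*t^3 + (5/49152)*t^4 + (1667/200000)*t^5 + (9/500000)*t^6 + (-19/100000)*t^7 + (-1/1000000)*t^8 + (7/1000000)*t^9) ≤ Real.cos t / Real.sin t :=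
    div_le_div₀ hcostpos.le hplcos hsintpos hsule
  have hstep1 : ((3101/100) + t^3*((1) + (477/500)*t + (607/1000)*t^2 + (161/500)*t^3 + (3/20)*t^4))/((3101/100)*t^3) * (((1)*t^2 + (1/6)*t^4 + (-51/250000)*t^5 + (4439/100000)*t^6 + (-51/500000)*t^7 + (1683/125000)*t^8 + (-8361/1000000)*t^9)^2) ≤
      (1 / t^3 + 1 / (π - t)^3) * (-2 * Real.log (Real.cos t))^2 :=
    mul_le_mul hA hL2 (by positivity) (le_trans hAnn hA)
  have hstep2 : ((3101/100) + t^3*((1) + (477/500)*t + (607/1000)*t^2 + (161/500)*t^3 + (3/20)*t^4))/((3101/100)*t^3) * (((1)*t^2 + (1/6)*t^4 + (-51/250000)*t^5 + (4439/100000)*t^6 + (-51/500000)*t^7 + (1683/125000)*t^8 + (-8361/1000000)*t^9)^2) * (((1) + (-1/2)*t^2 + (1/24)*t^4 + (-51/500000)*t^5 + (-1391/1000000)*t^6 + (23/1000000)*t^8 + (-3/1000000)*t^9)/((1)*t + (-1/6)*t^3 + (5/49152)*t^4 + (1667/200000)*t^5 + (9/500000)*t^6 + (-19/100000)*t^7 +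 (-1/1000000)*t^8 + (7/1000000)*t^9)) ≤
      (1 / t^3 + 1 / (π - t)^3) * (-2 * Real.log (Real.cos t))^2 * (Real.cos t / Real.sin t) :=
    mul_le_mul hstep1 hD (div_nonneg c_pl hsupos.le)
      (mul_nonneg (le_trans hAnn hA) (by positivity))
  have hfinal : 1 ≤ ((3101/100) + t^3*((1) + (477/500)*t + (607/1000)*t^2 + (161/500)*t^3 + (3/20)*t^4))/((3101/100)*t^3) * (((1)*t^2 + (1/6)*t^4 + (-51/250000)*t^5 + (4439/100000)*t^6 + (-51/500000)*t^7 + (1683/125000)*t^8 + (-8361/1000000)*t^9)^2) * (((1) + (-1/2)*t^2 + (1/24)*t^4 + (-51/500000)*t^5 + (-1391/1000000)*t^6 + (23/1000000)*t^8 + (-3/1000000)*t^9)/((1)*t + (-1/6)*t^3 + (5/49152)*t^4 + (1667/200000)*t^5 + (9/500000)*t^6 + (-19/100000)*t^7 + (-1/1000000)*t^8 + (7/1000000)*t^9)) := by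
    have hden : (0:ℝ) < (3101/100)*t^3*((1)*t + (-1/6)*t^3 + (5/49152)*t^4 + (1667/200000)*t^5 + (9/500000)*t^6 + (-19/100000)*t^7 + (-1/1000000)*t^8 + (7/1000000)*t^9) := by
      have h3 : (0:ℝ) < (3101/100)*t^3 := by positivity
      exact mul_pos h3 hsupos
    rw [show ((3101/100) + t^3*((1) + (477/500)*t + (607/1000)*t^2 + (161/500)*t^3 + (3/20)*t^4))/((3101/100)*t^3) * (((1)*t^2 + (1/6)*t^4 + (-51/250000)*t^5 + (4439/100000)*t^6 + (-51/500000)*t^7 + (1683/125000)*t^8 + (-8361/1000000)*t^9)^2) * (((1) + (-1/2)*t^2 + (1/24)*t^4 + (-51/500000)*t^5 + (-1391/1000000)*t^6 + (23/1000000)*t^8 + (-3/1000000)*t^9)/((1)*t + (-1/6)*t^3 + (5/49152)*t^4 + (1667/200000)*t^5 + (9/500000)*t^6 + (-19/100000)*t^7 + (-1/1000000)*t^8 + (7/1000000)*t^9)) =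
        (((3101/100) + t^3*((1) + (477/500)*t + (607/1000)*t^2 + (161/500)*t^3 + (3/20)*t^4)) * (((1)*t^2 + (1/6)*t^4 + (-51/250000)*t^5 + (4439/100000)*t^6 + (-51/500000)*t^7 + (1683/125000)*t^8 + (-8361/1000000)*t^9)^2) * ((1) + (-1/2)*t^2 + (1/24)*t^4 + (-51/500000)*t^5 + (-1391/1000000)*t^6 + (23/1000000)*t^8 + (-3/1000000)*t^9)) / ((3101/100)*t^3*((1)*t + (-1/6)*t^3 + (5/49152)*t^4 + (1667/200000)*t^5 + (9/500000)*t^6 + (-19/100000)*t^7 + (-1/1000000)*t^8 + (7/1000000)*t^9)) from by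
      field_simp]
    rw [le_div_iff₀ hden]
    linarith only [c_key]
  linarith only [hstep2, hfinal]
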